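/- Let A be a finite set and let (V_n)_{n=1}^∞ be a sequence of finite sets such that |V_n| increases to infinity. For each n let μ_n be a probability measure on A^{V_n}. Then liminf_{n→∞} H(μ_n)/|V_n| ≤ sup_{ε>0} liminf_{n→∞} (1/|V_n|)·log cov_ε(μ_n). -/

import Mathlib

open MeasureTheory Filter

/-- Shannon entropy of a measure on a finite set, with the convention `0 * log 0 = 0`. -/
noncomputable def shannonEntropy {D : Type*} [Fintype D] [MeasurableSpace D]
    (η : Measure D) : ℝ :=
  -∑ d : D, (η {d}).toReal * Real.log (η {d}).toReal

/-- `covNum η ε` is the minimal cardinality of a set `F` with `η F > 1 - ε`. -/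
noncomputable def covNum {D : Type*} [MeasurableSpace D] (η : Measure D) (ε : ℝ) : ℕ :=
  sInf {k : ℕ | ∃ F : Finset D, 1 - ε < (η ↑F).toReal ∧ F.card = k}

lemma gibbs_term {p q : ℝ} (hp : 0 ≤ p) (hq : 0 < q) :
    -(p * Real.log p) ≤ -(p * Real.log q) + (q - p) := by
  rcases eq_or_lt_of_le hp with h | h
  · simp only [← h, zero_mul, neg_zero, zero_add, sub_zero]
    positivity
  · have h1 : Real.log (q / p) ≤ q / p - 1 := Real.log_le_sub_one_of_pos (by positivity)
    rw [Real.log_div hq.ne' h.ne'] at h1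
    have h2 : p * (Real.log q - Real.log p) ≤ p * (q / p - 1) :=
      mul_le_mul_of_nonneg_left h1 h.le
    have h3 : p * (q / p - 1) = q - p := by field_simp
    nlinarith

lemma sum_neg_mul_log_le {D : Type*} (F : Finset D) (p : D → ℝ)
    (hp : ∀ i ∈ F, 0 ≤ p i) :
    ∑ i ∈ F, -(p i * Real.log (p i)) ≤
      (∑ i ∈ F, p i) * Real.log F.card - (∑ i ∈ F, p i) * Real.log (∑ i ∈ F, p i) := by
  set s := ∑ i ∈ F, p i with hs
  have hs0 : 0 ≤ s := Finset.sum_nonneg hp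
  rcases eq_or_lt_of_le hs0 with h | h
  · have hz : ∀ i ∈ F, p i = 0 := (Finset.sum_eq_zero_iff_of_nonneg hp).1 h.symm
    have : ∑ i ∈ F, -(p i * Real.log (p i)) = 0 :=
      Finset.sum_eq_zero fun i hi => by rw [hz i hi]; simp
    rw [this, ← h]
    simp
  · have hF : F.Nonempty := by
      by_contra hF
      rw [Finset.not_nonempty_iff_eq_empty] at hF
      rw [hs, hF, Finset.sum_empty] at h
      exact lt_irrefl 0 h
    have hk : (0:ℝ) < F.card := by exact_mod_cast Finset.card_pos.2 hF
    have hq : (0:ℝ) < s / F.card := by positivity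
    calc ∑ i ∈ F, -(p i * Real.log (p i))
        ≤ ∑ i ∈ F, (-(p i * Real.log (s / F.card)) + (s / F.card - p i)) :=
          Finset.sum_le_sum fun i hi => gibbs_term (hp i hi) hq
      _ = -(s * Real.log (s / F.card)) + ((F.card : ℝ) * (s / F.card) - s) := by
          rw [Finset.sum_add_distrib, Finset.sum_sub_distrib, Finset.sum_const]
          simp only [neg_mul_eq_neg_mul]
          rw [← Finset.sum_mul, Finset.sum_neg_distrib, ← hs, nsmul_eq_mul]
      _ = s * Real.log F.card - s * Real.log s := by
          rw [Real.log_div h.ne' hk.ne', mul_div_cancel₀ _ hk.ne']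
          ring

lemma measure_finset_toReal {D : Type*} [MeasurableSpace D] [DiscreteMeasurableSpace D]
    (η : Measure D) [IsFiniteMeasure η] (G : Finset D) :
    (η ↑G).toReal = ∑ d ∈ G, (η {d}).toReal := by
  classical
  have h1 : (↑G : Set D) = ⋃ d ∈ G, {d} := by ext x; simp
  rw [h1, measure_biUnion_finset (fun i _ j _ hij => Set.disjoint_singleton.2 hij)
    (fun _ _ => MeasurableSet.singleton _)]
  exact ENNReal.toReal_sum fun a _ => measure_ne_top η _

lemma shannonEntropy_le_of_cov {D : Type*} [Fintype D] [MeasurableSpace D]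
    [DiscreteMeasurableSpace D] (η : Measure D) [IsProbabilityMeasure η]
    {ε : ℝ} (hε : 0 < ε) (hε1 : ε < 1)
    {F : Finset D} (hF : 1 - ε < (η ↑F).toReal) :
    shannonEntropy η ≤ Real.log F.card + ε * Real.log (Fintype.card D) + Real.log 2 := by
  classical
  set p : D → ℝ := fun d => (η {d}).toReal with hpdef
  have hp : ∀ d, 0 ≤ p d := fun d => ENNReal.toReal_nonneg
  set a : ℝ := ∑ d ∈ F, p d with hadef
  set b : ℝ := ∑ d ∈ Fᶜ, p d with hbdef
  have hab : a + b = 1 := by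
    rw [hadef, hbdef, Finset.sum_add_sum_compl]
    have := measure_finset_toReal η (Finset.univ : Finset D)
    rw [Finset.coe_univ, measure_univ, ENNReal.toReal_one] at this
    exact this.symm
  have haF : a = (η ↑F).toReal := (measure_finset_toReal η F).symm
  have ha1 : 1 - ε < a := haF ▸ hF
  have ha0 : 0 < a := by linarith
  have hb0 : 0 ≤ b := Finset.sum_nonneg fun d _ => hp d
  have ha_le : a ≤ 1 := by linarith
  have hbε : b < ε := by linarith
  -- D is nonempty
  have hDne : 0 < Fintype.card D := by
    rcases isEmpty_or_nonempty D with hD | hD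
    · exfalso
      have h0 : η Set.univ = 1 := measure_univ
      rw [Set.univ_eq_empty_iff.2 hD, measure_empty] at h0
      exact zero_ne_one h0
    · exact Fintype.card_pos
  have hlogD : 0 ≤ Real.log (Fintype.card D) := Real.log_natCast_nonneg _
  -- F is nonempty
  have hFne : F.Nonempty := by
    rcases F.eq_empty_or_nonempty with h | h
    · exfalso
      rw [h] at haF
      simp at haF
      rw [haF] at ha0
      exact lt_irrefl 0 ha0
    · exact h
  have hlogF : 0 ≤ Real.log F.card := Real.log_natCast_nonneg _
  -- split entropy
  have hH : shannonEntropy η = ∑ d ∈ F, -(p d * Real.log (p d))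
      + ∑ d ∈ Fᶜ, -(p d * Real.log (p d)) := by
    rw [Finset.sum_add_sum_compl, shannonEntropy, ← Finset.sum_neg_distrib]
  have h1 : ∑ d ∈ F, -(p d * Real.log (p d)) ≤ a * Real.log F.card - a * Real.log a := by
    have := sum_neg_mul_log_le F p (fun i _ => hp i)
    rwa [← hadef] at this
  have h2 : ∑ d ∈ Fᶜ, -(p d * Real.log (p d)) ≤ b * Real.log Fᶜ.card - b * Real.log b := by
    have := sum_neg_mul_log_le Fᶜ p (fun i _ => hp i)
    rwa [← hbdef] at this
  -- binary entropy bound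
  have hbin : -(a * Real.log a) - b * Real.log b ≤ Real.log 2 := by
    have hb_eq : b = 1 - a := by linarith
    have := Real.binEntropy_le_log_two (p := a)
    rw [Real.binEntropy, Real.log_inv, Real.log_inv] at this
    rw [hb_eq]
    nlinarith [this]
  have h3 : a * Real.log F.card ≤ Real.log F.card := by
    nlinarith
  have h4 : b * Real.log Fᶜ.card ≤ ε * Real.log (Fintype.card D) := by
    have hcard : (Fᶜ.card : ℝ) ≤ Fintype.card D := by
      exact_mod_cast Finset.card_le_univ Fᶜ
    have hlog : Real.log Fᶜ.card ≤ Real.log (Fintype.card D) := by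
      rcases Nat.eq_zero_or_pos Fᶜ.card with h | h
      · rw [h]; simpa using hlogD
      · exact Real.log_le_log (by exact_mod_cast h) hcard
    have hlogc : 0 ≤ Real.log (Fᶜ.card : ℝ) := Real.log_natCast_nonneg _
    nlinarith
  linarith [hH, h1, h2, hbin, h3, h4]

lemma covNum_spec {D : Type*} [Fintype D] [MeasurableSpace D]
    (η : Measure D) [IsProbabilityMeasure η] {ε : ℝ} (hε : 0 < ε) :
    ∃ F : Finset D, 1 - ε < (η ↑F).toReal ∧ F.card = covNum η ε := by
  have hne : {k : ℕ | ∃ F : Finset D, 1 - ε < (η ↑F).toReal ∧ F.card = k}.Nonempty := by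
    refine ⟨(Finset.univ : Finset D).card, Finset.univ, ?_, rfl⟩
    rw [Finset.coe_univ, measure_univ, ENNReal.toReal_one]
    linarith
  exact Nat.sInf_mem hne

lemma covNum_le_card {D : Type*} [Fintype D] [MeasurableSpace D]
    (η : Measure D) [IsProbabilityMeasure η] {ε : ℝ} (hε : 0 < ε) :
    covNum η ε ≤ Fintype.card D := by
  apply Nat.sInf_le
  refine ⟨Finset.univ, ?_, Finset.card_univ⟩
  rw [Finset.coe_univ, measure_univ, ENNReal.toReal_one]
  linarith

lemma shannonEntropy_nonneg {D : Type*} [Fintype D] [MeasurableSpace D]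
    (η : Measure D) [IsProbabilityMeasure η] : 0 ≤ shannonEntropy η := by
  rw [shannonEntropy, neg_nonneg]
  apply Finset.sum_nonpos
  intro d _
  have h0 : 0 ≤ (η {d}).toReal := ENNReal.toReal_nonneg
  have h1 : (η {d}).toReal ≤ 1 := by
    simpa using ENNReal.toReal_mono ENNReal.one_ne_top (prob_le_one (μ := η) (s := {d}))
  exact mul_nonpos_of_nonneg_of_nonpos h0 (Real.log_nonpos h0 h1)

lemma shannonEntropy_le_log_card {D : Type*} [Fintype D] [MeasurableSpace D]
    [DiscreteMeasurableSpace D] (η : Measure D) [IsProbabilityMeasure η] :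
    shannonEntropy η ≤ Real.log (Fintype.card D) := by
  classical
  have hsum : ∑ d ∈ (Finset.univ : Finset D), (η {d}).toReal = 1 := by
    have := measure_finset_toReal η (Finset.univ : Finset D)
    rw [Finset.coe_univ, measure_univ, ENNReal.toReal_one] at this
    exact this.symm
  have := sum_neg_mul_log_le (Finset.univ : Finset D) (fun d => (η {d}).toReal)
    (fun i _ => ENNReal.toReal_nonneg)
  rw [hsum] at this
  rw [shannonEntropy, ← Finset.sum_neg_distrib]
  simpa [Finset.card_univ] using this

lemma log_covNum_le_log_card {D : Type*} [Fintype D] [MeasurableSpace D]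
    (η : Measure D) [IsProbabilityMeasure η] {ε : ℝ} (hε : 0 < ε) :
    Real.log (covNum η ε) ≤ Real.log (Fintype.card D) := by
  rcases Nat.eq_zero_or_pos (covNum η ε) with h | h
  · rw [h]
    simpa using Real.log_natCast_nonneg (Fintype.card D)
  · exact Real.log_le_log (by exact_mod_cast h) (by exact_mod_cast covNum_le_card η hε)

theorem stmt0 (A : Type*) [Fintype A] [MeasurableSpace A] [DiscreteMeasurableSpace A]
    (V : ℕ → Type*) [∀ n, Fintype (V n)] [∀ n, DecidableEq (V n)]
    (hmono : Monotone fun n => Fintype.card (V n))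
    (htop : Tendsto (fun n => Fintype.card (V n)) atTop atTop)
    (μ : (n : ℕ) → Measure (V n → A)) (hprob : ∀ n, IsProbabilityMeasure (μ n)) :
    liminf (fun n => shannonEntropy (μ n) / (Fintype.card (V n) : ℝ)) atTop ≤
      ⨆ (ε : ℝ) (_ : 0 < ε),
        liminf (fun n => Real.log (covNum (μ n) ε) / (Fintype.card (V n) : ℝ)) atTop := by
  classical
  set f : ℕ → ℝ := fun n => shannonEntropy (μ n) / (Fintype.card (V n) : ℝ) with hfdef
  set g : ℝ → ℕ → ℝ :=
    fun ε n => Real.log (covNum (μ n) ε) / (Fintype.card (V n) : ℝ) with hgdef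
  set S : ℝ := ⨆ (ε : ℝ) (_ : 0 < ε), liminf (g ε) atTop with hSdef
  show liminf f atTop ≤ S
  -- A is nonempty
  obtain ⟨n₀, hn₀⟩ := (htop.eventually_ge_atTop 1).exists
  haveI hV₀ : Nonempty (V n₀) := Fintype.card_pos_iff.1 hn₀
  haveI hA : Nonempty A := by
    rcases isEmpty_or_nonempty A with h | h
    · exfalso
      haveI : IsEmpty (V n₀ → A) := ⟨fun φ => h.false (φ (Classical.arbitrary _))⟩
      haveI := hprob n₀
      have h0 : (μ n₀) Set.univ = 1 := measure_univ
      rw [Set.univ_eq_empty_iff.2 ‹IsEmpty (V n₀ → A)›, measure_empty] at h0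
      exact zero_ne_one h0
    · exact h
  set LA : ℝ := Real.log (Fintype.card A) with hLAdef
  have hLA0 : 0 ≤ LA := Real.log_natCast_nonneg _
  have hcard_fun : ∀ n, Real.log (Fintype.card (V n → A)) = (Fintype.card (V n) : ℝ) * LA := by
    intro n
    rw [Fintype.card_fun]
    push_cast
    rw [Real.log_pow]
  have hf_nonneg : ∀ n, 0 ≤ f n := fun n => by
    haveI := hprob n
    exact div_nonneg (shannonEntropy_nonneg _) (Nat.cast_nonneg _)
  have hg_nonneg : ∀ ε n, 0 ≤ g ε n := fun ε n =>
    div_nonneg (Real.log_natCast_nonneg _) (Nat.cast_nonneg _)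
  have hg_le : ∀ ε : ℝ, 0 < ε → ∀ᶠ n in atTop, g ε n ≤ LA := by
    intro ε hε
    filter_upwards [htop.eventually_ge_atTop 1] with n hn
    haveI := hprob n
    have hv : (0:ℝ) < (Fintype.card (V n) : ℝ) := by exact_mod_cast hn
    have h1 : Real.log (covNum (μ n) ε) ≤ (Fintype.card (V n) : ℝ) * LA := by
      calc Real.log (covNum (μ n) ε) ≤ Real.log (Fintype.card (V n → A)) :=
            log_covNum_le_log_card (μ n) hε
        _ = (Fintype.card (V n) : ℝ) * LA := hcard_fun n
    rw [hgdef]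
    simp only
    rw [div_le_iff₀ hv]
    linarith [h1]
  have bdd_f : IsBoundedUnder (· ≥ ·) atTop f := isBoundedUnder_of ⟨0, fun n => hf_nonneg n⟩
  have bdd_g : ∀ ε : ℝ, IsBoundedUnder (· ≥ ·) atTop (g ε) := fun ε =>
    isBoundedUnder_of ⟨0, fun n => hg_nonneg ε n⟩
  have cobdd_g : ∀ ε : ℝ, 0 < ε → IsCoboundedUnder (· ≥ ·) atTop (g ε) := fun ε hε =>
    (isBoundedUnder_of_eventually_le (hg_le ε hε)).isCoboundedUnder_ge
  have liminf_g_le : ∀ ε : ℝ, 0 < ε → liminf (g ε) atTop ≤ LA := fun ε hε =>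
    liminf_le_of_frequently_le ((hg_le ε hε).frequently) (bdd_g ε)
  have hbdd : BddAbove (Set.range fun ε : ℝ => ⨆ _ : 0 < ε, liminf (g ε) atTop) := by
    refine ⟨LA, ?_⟩
    rintro x ⟨ε, rfl⟩
    show ⨆ _ : 0 < ε, liminf (g ε) atTop ≤ LA
    rcases lt_or_ge 0 ε with hε | hε
    · rw [ciSup_pos (f := fun _ => liminf (g ε) atTop) hε]
      exact liminf_g_le ε hε
    · haveI : IsEmpty (0 < ε) := ⟨fun h => absurd h (not_lt.2 hε)⟩
      rw [Real.iSup_of_isEmpty]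
      exact hLA0
  have le_S : ∀ ε : ℝ, 0 < ε → liminf (g ε) atTop ≤ S := by
    intro ε hε
    have h1 : liminf (g ε) atTop = ⨆ _ : 0 < ε, liminf (g ε) atTop :=
      (ciSup_pos (f := fun _ => liminf (g ε) atTop) hε).symm
    rw [hSdef, h1]
    exact le_ciSup hbdd ε
  -- main estimate
  refine le_of_forall_pos_le_add fun c hc => ?_
  set ε : ℝ := min (1/2) (c / (2 * (LA + 1))) with hεdef
  have hε : 0 < ε := lt_min (by norm_num) (by positivity)
  have hε1 : ε < 1 := lt_of_le_of_lt (min_le_left _ _) (by norm_num)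
  have hεLA : ε * LA ≤ c / 2 := by
    have h1 : ε ≤ c / (2 * (LA + 1)) := min_le_right _ _
    have h2 : ε * LA ≤ (c / (2 * (LA + 1))) * LA := mul_le_mul_of_nonneg_right h1 hLA0
    have h3 : (c / (2 * (LA + 1))) * LA ≤ c / 2 := by
      rw [div_mul_eq_mul_div, div_le_div_iff₀ (by positivity) (by norm_num)]
      nlinarith
    linarith
  have ev2 : ∀ᶠ n in atTop, Real.log 2 / (Fintype.card (V n) : ℝ) ≤ c / 2 := by
    have hcast : Tendsto (fun n => (Fintype.card (V n) : ℝ)) atTop atTop :=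
      tendsto_natCast_atTop_atTop.comp htop
    have h0 : Tendsto (fun n => Real.log 2 / (Fintype.card (V n) : ℝ)) atTop (nhds 0) :=
      Tendsto.div_atTop tendsto_const_nhds hcast
    exact (h0.eventually_lt_const (by positivity)).mono fun n h => h.le
  have hev : ∀ᶠ n in atTop, f n ≤ g ε n + c := by
    filter_upwards [htop.eventually_ge_atTop 1, ev2] with n h1 h2
    haveI := hprob n
    obtain ⟨F, hF, hcard⟩ := covNum_spec (μ n) hε
    have hmain := shannonEntropy_le_of_cov (μ n) hε hε1 hF
    rw [hcard, hcard_fun n] at hmain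
    have hv : (0:ℝ) < (Fintype.card (V n) : ℝ) := by exact_mod_cast h1
    have h3 : shannonEntropy (μ n) / (Fintype.card (V n) : ℝ) ≤
        (Real.log (covNum (μ n) ε) + ε * ((Fintype.card (V n) : ℝ) * LA) + Real.log 2) /
          (Fintype.card (V n) : ℝ) := by
      gcongr
    have h4 : (Real.log (covNum (μ n) ε) + ε * ((Fintype.card (V n) : ℝ) * LA) + Real.log 2) /
          (Fintype.card (V n) : ℝ) =
        Real.log (covNum (μ n) ε) / (Fintype.card (V n) : ℝ) + ε * LA
          + Real.log 2 / (Fintype.card (V n) : ℝ) := by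
      field_simp
    rw [h4] at h3
    have : f n = shannonEntropy (μ n) / (Fintype.card (V n) : ℝ) := rfl
    have hgn : g ε n = Real.log (covNum (μ n) ε) / (Fintype.card (V n) : ℝ) := rfl
    rw [this, hgn]
    linarith
  have cobdd_gc : IsCoboundedUnder (· ≥ ·) atTop (fun n => g ε n + c) :=
    (isBoundedUnder_of_eventually_le
      ((hg_le ε hε).mono fun n h => add_le_add_left h c)).isCoboundedUnder_ge
  calc liminf f atTop ≤ liminf (fun n => g ε n + c) atTop :=
        liminf_le_liminf hev bdd_f cobdd_gc
    _ = liminf (g ε) atTop + c := liminf_add_const atTop (g ε) c (cobdd_g ε hε) (bdd_g ε)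
    _ ≤ S + c := add_le_add_left (le_S ε hε) c
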